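/- Let (X,‖·‖_X) be a real normed space, let Y ⊆ X be a linear subspace endowed with a norm ‖·‖_Y such that sup{‖y‖_Y : y ∈ Y, ‖y‖_X = 1} = ∞. Define g : X → [0,∞] by g(x) = ‖x‖_Y if x ∈ Y and g(x) = ∞ otherwise. If g is lower semicontinuous on X (with respect to ‖·‖_X), then Y is of the first category in X, i.e. Y is meager (a countable union of nowhere dense sets), so X ∖ Y is generic (comeager) in X. -/

import Mathlib

open scoped ENNReal Classical

noncomputable section

/-- A functional-analytic Baire category lemma: if `Y` is a subspace of a
normed space `X` endowed with a norm `‖·‖_Y` which is unbounded on the unit sphere of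
`‖·‖_X`, and the extended functional `g = ‖·‖_Y` (set to `∞` outside `Y`) is lower
semicontinuous on `X`, then `Y` is meager in `X`, i.e. `X ∖ Y` is comeager. -/
theorem stmt16 {X : Type*} [NormedAddCommGroup X] [NormedSpace ℝ X]
    (Y : Submodule ℝ X) (nrm : Y → ℝ)
    (hnonneg : ∀ y, 0 ≤ nrm y)
    (htriangle : ∀ y z, nrm (y + z) ≤ nrm y + nrm z)
    (hhomog : ∀ (r : ℝ) (y : Y), nrm (r • y) = |r| * nrm y)
    (hunbounded : ∀ C : ℝ, ∃ y : Y, ‖(y : X)‖ = 1 ∧ C ≤ nrm y)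
    (hlsc : LowerSemicontinuous
      (fun x : X => if h : x ∈ Y then ENNReal.ofReal (nrm ⟨x, h⟩) else (⊤ : ℝ≥0∞))) :
    IsMeagre (Y : Set X) ∧ ((Y : Set X)ᶜ ∈ residual X) := by
  set g : X → ℝ≥0∞ := fun x : X =>
    if h : x ∈ Y then ENNReal.ofReal (nrm ⟨x, h⟩) else (⊤ : ℝ≥0∞) with hg
  set F : ℕ → Set X := fun n => {x | g x ≤ (n : ℝ≥0∞)} with hF
  -- membership in F n for points of Y
  have hmemF : ∀ (n : ℕ) (x : X) (hx : x ∈ Y), nrm ⟨x, hx⟩ ≤ (n : ℝ) → x ∈ F n := by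
    intro n x hx hle
    simp only [hF, Set.mem_setOf_eq, hg, dif_pos hx]
    calc ENNReal.ofReal (nrm ⟨x, hx⟩) ≤ ENNReal.ofReal (n : ℝ) :=
          ENNReal.ofReal_le_ofReal hle
      _ = (n : ℝ≥0∞) := by simp
  have hFmem : ∀ (n : ℕ) (x : X), x ∈ F n → ∃ hx : x ∈ Y, nrm ⟨x, hx⟩ ≤ (n : ℝ) := by
    intro n x hx
    simp only [hF, Set.mem_setOf_eq, hg] at hx
    by_cases h : x ∈ Y
    · refine ⟨h, ?_⟩
      rw [dif_pos h, ← ENNReal.ofReal_natCast n,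
        ENNReal.ofReal_le_ofReal_iff (Nat.cast_nonneg n)] at hx
      exact hx
    · rw [dif_neg h] at hx
      exact absurd (top_le_iff.mp hx) (by simp)
  -- each F n is closed
  have hclosed : ∀ n, IsClosed (F n) := fun n => hlsc.isClosed_preimage _
  -- each F n has empty interior
  have hint : ∀ n, interior (F n) = ∅ := by
    intro n
    by_contra h
    obtain ⟨x₀, hx₀⟩ := Set.nonempty_iff_ne_empty.mpr h
    obtain ⟨ε, hε, hball⟩ := Metric.isOpen_iff.mp isOpen_interior x₀ hx₀
    have hx₀F : x₀ ∈ F n := interior_subset hx₀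
    obtain ⟨hx₀Y, hx₀n⟩ := hFmem n x₀ hx₀F
    obtain ⟨y, hy1, hyC⟩ := hunbounded ((4 * n) / ε + 1)
    -- x₀ + (ε/2) • y ∈ ball x₀ ε
    have hmem : x₀ + (ε / 2) • (y : X) ∈ Metric.ball x₀ ε := by
      simp only [Metric.mem_ball, dist_eq_norm]
      have : x₀ + (ε / 2) • (y : X) - x₀ = (ε / 2) • (y : X) := by ring_nf; abel
      rw [this, norm_smul, hy1, mul_one, Real.norm_eq_abs,
        abs_of_pos (by linarith : (0 : ℝ) < ε / 2)]
      linarith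
    have hF2 : x₀ + (ε / 2) • (y : X) ∈ F n := interior_subset (hball hmem)
    obtain ⟨hzY, hzn⟩ := hFmem n _ hF2
    -- estimate nrm of (ε/2) • y
    have hsubY : (⟨x₀ + (ε / 2) • (y : X), hzY⟩ : Y) = ⟨x₀, hx₀Y⟩ + (ε / 2) • y := by
      ext; simp
    have hsplit : (ε / 2) • y = (⟨x₀, hx₀Y⟩ + (ε / 2) • y) + (-1 : ℝ) • (⟨x₀, hx₀Y⟩ : Y) := by
      module
    have hle : nrm ((ε / 2) • y) ≤ 2 * n := by
      rw [hsplit]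
      calc nrm ((⟨x₀, hx₀Y⟩ + (ε / 2) • y) + (-1 : ℝ) • (⟨x₀, hx₀Y⟩ : Y))
          ≤ nrm (⟨x₀, hx₀Y⟩ + (ε / 2) • y) + nrm ((-1 : ℝ) • (⟨x₀, hx₀Y⟩ : Y)) :=
            htriangle _ _
        _ ≤ (n : ℝ) + (n : ℝ) := by
            rw [hhomog]
            simp only [abs_neg, abs_one, one_mul]
            apply add_le_add _ hx₀n
            rw [← hsubY]; exact hzn
        _ = 2 * n := by ring
    rw [hhomog, abs_of_pos (by linarith : (0 : ℝ) < ε / 2)] at hle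
    have hnrm_le : nrm y ≤ (4 * n) / ε := by
      rw [le_div_iff₀ hε]
      nlinarith
    linarith
  -- conclude
  have hmeagre : IsMeagre (Y : Set X) := by
    have hsub : (Y : Set X) ⊆ ⋃ n, F n := by
      intro x hx
      refine Set.mem_iUnion.mpr ⟨⌈nrm ⟨x, hx⟩⌉₊, hmemF _ x hx (Nat.le_ceil _)⟩
    refine IsMeagre.mono hsub (isMeagre_iUnion fun n => ?_)
    rw [IsMeagre]
    apply residual_of_dense_open (hclosed n).isOpen_compl
    rw [← interior_eq_empty_iff_dense_compl]
    exact hint n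
  exact ⟨hmeagre, hmeagre⟩
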